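/- Let u be a positive integer, let y₀ be a real number with 0 < y₀ ≤ 1/(2u), and let z be a complex number with Re(z) > 0, Im(z) > 0, |2uz − 1| < 1, and Im(z) ≥ y₀. Then Im(z/(1 − uz)) − Im(z) ≥ ε_u(y₀), and ε_u(y₀) > 0, where ε_u(y) = 2y/(1 + √(1 − 4u²y²)) − y. -/

import Mathlib

set_option maxHeartbeats 1000000 in
theorem stmt_13 (u : ℕ) (hu : 0 < u) (y₀ : ℝ) (hy₀ : 0 < y₀)
    (hy₀' : y₀ ≤ 1 / (2 * u)) (z : ℂ) (hre : 0 < z.re) (him : 0 < z.im)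
    (hz : ‖2 * u * z - 1‖ < 1) (himy : y₀ ≤ z.im) :
    2 * y₀ / (1 + Real.sqrt (1 - 4 * u ^ 2 * y₀ ^ 2)) - y₀ ≤
      (z / (1 - u * z)).im - z.im ∧
    0 < 2 * y₀ / (1 + Real.sqrt (1 - 4 * u ^ 2 * y₀ ^ 2)) - y₀ := by
  have hU0 : (0:ℝ) < (u:ℝ) := by exact_mod_cast hu
  have h4 : 4 * (u:ℝ) ^ 2 * y₀ ^ 2 ≤ 1 := by
    have h2 : 2 * (u:ℝ) * y₀ ≤ 1 := by
      have := (le_div_iff₀ (by positivity : (0:ℝ) < 2 * (u:ℝ))).mp hy₀'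
      nlinarith
    nlinarith [mul_pos (mul_pos (by norm_num : (0:ℝ) < 2) hU0) hy₀]
  have hs0 : 0 ≤ Real.sqrt (1 - 4 * (u:ℝ) ^ 2 * y₀ ^ 2) := Real.sqrt_nonneg _
  have hssq : (Real.sqrt (1 - 4 * (u:ℝ) ^ 2 * y₀ ^ 2)) ^ 2
      = 1 - 4 * (u:ℝ) ^ 2 * y₀ ^ 2 := Real.sq_sqrt (by linarith)
  set s : ℝ := Real.sqrt (1 - 4 * (u:ℝ) ^ 2 * y₀ ^ 2) with hsdef
  clear_value s
  have hs1 : s < 1 := by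
    nlinarith [mul_pos hU0 hy₀, sq_nonneg (s - 1)]
  have hs1' : (0:ℝ) < 1 + s := by linarith
  -- disk condition
  have key : (u:ℝ) ^ 2 * z.re ^ 2 + (u:ℝ) ^ 2 * z.im ^ 2 < (u:ℝ) * z.re := by
    have h' : Complex.normSq (2 * (u:ℂ) * z - 1) < 1 := by
      rw [← Complex.sq_norm]
      nlinarith [norm_nonneg (2 * (u:ℂ) * z - 1)]
    simp [Complex.normSq_apply, Complex.mul_re, Complex.mul_im] at h'
    nlinarith [h']
  -- imaginary part formula
  have him_eq : (z / (1 - (u:ℂ) * z)).im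
      = z.im / ((1 - (u:ℝ) * z.re) ^ 2 + ((u:ℝ) * z.im) ^ 2) := by
    rw [Complex.div_im]
    have h1 : (1 - (u:ℂ) * z).re = 1 - (u:ℝ) * z.re := by simp [Complex.mul_re]
    have h2 : (1 - (u:ℂ) * z).im = -((u:ℝ) * z.im) := by simp [Complex.mul_im]
    have h3 : Complex.normSq (1 - (u:ℂ) * z)
        = (1 - (u:ℝ) * z.re) ^ 2 + ((u:ℝ) * z.im) ^ 2 := by
      simp [Complex.normSq_apply, Complex.mul_re, Complex.mul_im]
      ring
    rw [h1, h2, h3]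
    have hd0 : (0:ℝ) < (1 - (u:ℝ) * z.re) ^ 2 + ((u:ℝ) * z.im) ^ 2 := by
      positivity
    field_simp
    ring
  rw [him_eq]
  have hd0 : (0:ℝ) < (1 - (u:ℝ) * z.re) ^ 2 + ((u:ℝ) * z.im) ^ 2 := by
    nlinarith [mul_pos hU0 him, sq_nonneg (1 - (u:ℝ) * z.re)]
  -- U*x > (1-s)/2
  have hux : (1 - s) / 2 < (u:ℝ) * z.re := by
    have hyy : y₀ ^ 2 ≤ z.im ^ 2 := by nlinarith
    have h5 : (u:ℝ) ^ 2 * z.re ^ 2 - (u:ℝ) * z.re + (u:ℝ) ^ 2 * y₀ ^ 2 < 0 := by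
      nlinarith
    have h6 : (2 * ((u:ℝ) * z.re) - 1 + s) * (2 * ((u:ℝ) * z.re) - 1 - s) < 0 := by
      nlinarith [h5]
    by_contra hc
    push_neg at hc
    nlinarith [mul_nonneg (by linarith : (0:ℝ) ≤ -(2 * ((u:ℝ) * z.re) - 1 + s))
      (by linarith : (0:ℝ) ≤ -(2 * ((u:ℝ) * z.re) - 1 - s))]
  have hdlt : (1 - (u:ℝ) * z.re) ^ 2 + ((u:ℝ) * z.im) ^ 2 < (1 + s) / 2 := by
    nlinarith
  constructor
  · have e1 : 2 * y₀ / (1 + s) - y₀ = y₀ * (1 - s) / (1 + s) := by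
      field_simp; ring
    have e2 : z.im / ((1 - (u:ℝ) * z.re) ^ 2 + ((u:ℝ) * z.im) ^ 2) - z.im
        = z.im * (1 - ((1 - (u:ℝ) * z.re) ^ 2 + ((u:ℝ) * z.im) ^ 2))
          / ((1 - (u:ℝ) * z.re) ^ 2 + ((u:ℝ) * z.im) ^ 2) := by
      field_simp
    rw [e1, e2, div_le_div_iff₀ hs1' hd0]
    nlinarith [mul_nonneg (mul_nonneg (sub_nonneg.mpr himy)
        (by nlinarith : (0:ℝ) ≤ 1 - ((1 - (u:ℝ) * z.re) ^ 2 + ((u:ℝ) * z.im) ^ 2))) hs1'.le,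
      mul_pos hy₀
        (by nlinarith : (0:ℝ) < 1 + s - 2 * ((1 - (u:ℝ) * z.re) ^ 2 + ((u:ℝ) * z.im) ^ 2))]
  · have h1 : y₀ * (1 + s) < 2 * y₀ := by nlinarith
    have h2 := (lt_div_iff₀ hs1').mpr h1
    linarith
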